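/- arXiv:2510.08310 — 6 statements merged into one kernel-verified Lean document; each statement's English description precedes it below -/
import Mathlib

section
/- In the prism graph C_n □ K_2 (n ≥ 3), every hamiltonian cycle contains either exactly 2 pillar edges or all n pillar edges. -/
open SimpleGraph

/-- Vertex type of the `n`-prism `C_n □ K_2`: the base cycle consists of the
vertices `(i, false)` (the `sᵢ`) and the top cycle of the vertices `(i, true)` (the `tᵢ`). -/
abbrev PV (n : ℕ) := ZMod n × Bool

/-- The prism graph `C_n □ K_2`. -/
def prismG (n : ℕ) : SimpleGraph (PV n) :=
  SimpleGraph.fromRel fun u v =>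
    (u.1 = v.1 ∧ u.2 ≠ v.2) ∨ (u.2 = v.2 ∧ v.1 = u.1 + 1)

/-- The pillar edge `sᵢtᵢ`. -/
def pillar (n : ℕ) (i : ZMod n) : Sym2 (PV n) :=
  s(((i, false) : PV n), ((i, true) : PV n))

/-- The base-cycle edge `sᵢs_{i+1}`. -/
def baseEdge (n : ℕ) (i : ZMod n) : Sym2 (PV n) :=
  s(((i, false) : PV n), ((i + 1, false) : PV n))

/-- The top-cycle edge `tᵢt_{i+1}`. -/
def topEdge (n : ℕ) (i : ZMod n) : Sym2 (PV n) :=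
  s(((i, true) : PV n), ((i + 1, true) : PV n))

def IsPillar {n : ℕ} (e : Sym2 (PV n)) : Prop := ∃ i, e = pillar n i
def IsBaseEdge {n : ℕ} (e : Sym2 (PV n)) : Prop := ∃ i, e = baseEdge n i
def IsTopEdge {n : ℕ} (e : Sym2 (PV n)) : Prop := ∃ i, e = topEdge n i

/-- A hamiltonian cycle of the prism is *meandering* if no two of its edges lying on the
top cycle or on the base cycle are adjacent (share a vertex; in a cycle, edges sharing a
vertex are exactly the consecutive ones). -/
def Meandering {n : ℕ} {v : PV n} (C : (prismG n).Walk v v) : Prop :=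
  ∀ e ∈ C.edges, ∀ f ∈ C.edges, e ≠ f →
    ((IsBaseEdge e ∧ IsBaseEdge f) ∨ (IsTopEdge e ∧ IsTopEdge f)) → ¬ ∃ x, x ∈ e ∧ x ∈ f

/-- Explicit edge list of the Tutte Fragment on 15 vertices, following Tutte (1946):
`0 = a`, `1 = b` (the two bottom corner 2-valent vertices), `2 = c` (the apex 2-valent
vertex); `3, …, 14` are the internal 3-valent vertices `p₁, …, p₁₂`. -/
def TFedges : List (Fin 15 × Fin 15) :=
  [(0,4),(4,5),(5,6),(6,2),(1,7),(7,8),(8,2),(0,14),(14,1),(4,9),(9,3),(3,10),(10,7),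
   (5,11),(11,12),(6,13),(13,8),(13,12),(12,10),(11,9),(3,14)]

/-- The Tutte Fragment as a simple graph on `Fin 15`. -/
def TF : SimpleGraph (Fin 15) :=
  SimpleGraph.fromRel fun x y => (x, y) ∈ TFedges

/-- The attachment port of the prism vertex `u` used for the former prism edge towards the
neighbour `w`, after the TF-inflations prescribed by the set `S` of inflated vertices and the
orientation choice `orient`.  A non-inflated vertex keeps its single representative (port `0`);
for an inflated vertex the vertex `c = 2` of its Tutte Fragment is incident with the pillar,
and the vertices `a = 0`, `b = 1` are attached to the two cycle neighbours according to
`orient u`. -/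
def port {n : ℕ} (S : Finset (PV n)) (orient : PV n → Bool) (u w : PV n) : Fin 15 :=
  if u ∉ S then 0
  else if u.1 = w.1 then 2
  else if w.1 = u.1 + 1 then (if orient u then 0 else 1)
  else (if orient u then 1 else 0)

/-- Vertex type of the TF-inflated prism: an inflated prism vertex `v ∈ S` is replaced by the
15 vertices `(v, k)` of a fresh copy of the Tutte Fragment, while a non-inflated vertex `v`
is represented by `(v, 0)` alone. -/
def InflV (n : ℕ) (S : Finset (PV n)) := {x : PV n × Fin 15 // x.1 ∈ S ∨ x.2 = 0}

/-- The graph obtained from the prism `C_n □ K_2` by TF-inflating every vertex in `S`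
(with orientations `orient`, and with the `c`-vertex of each fragment incident to the
corresponding pillar). -/
def inflPrism (n : ℕ) (S : Finset (PV n)) (orient : PV n → Bool) :
    SimpleGraph (InflV n S) :=
  SimpleGraph.fromRel fun x y =>
    (x.val.1 = y.val.1 ∧ x.val.1 ∈ S ∧ TF.Adj x.val.2 y.val.2) ∨
    (x.val.1 ≠ y.val.1 ∧ (prismG n).Adj x.val.1 y.val.1 ∧
      x.val.2 = port S orient x.val.1 y.val.1 ∧
      y.val.2 = port S orient y.val.1 x.val.1)

/-- The vertex of the inflated prism representing the attachment port of the prism vertex `u`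
towards its prism neighbour `w`. -/
def liftV {n : ℕ} (S : Finset (PV n)) (orient : PV n → Bool) (u w : PV n) :
    InflV n S :=
  ⟨(u, port S orient u w), by
    by_cases h : u ∈ S
    · exact Or.inl h
    · exact Or.inr (by simp [port, h])⟩

/-- The set of (indices of) pillars of the prism carrying at least one TF-inflated vertex. -/
def inflatedPillars {n : ℕ} (S : Finset (PV n)) : Set (ZMod n) :=
  {i : ZMod n | ((i, false) : PV n) ∈ S ∨ ((i, true) : PV n) ∈ S}

instance (n : ℕ) (S : Finset (PV n)) : DecidableEq (InflV n S) := by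
  unfold InflV; infer_instance


open SimpleGraph.Walk

set_option linter.unusedSectionVars false
set_option linter.unusedVariables false

def rowEdge (n : ℕ) (c : Bool) (i : ZMod n) : Sym2 (PV n) :=
  s(((i, c) : PV n), ((i + 1, c) : PV n))

lemma rowEdge_false {n : ℕ} (i : ZMod n) : rowEdge n false i = baseEdge n i := rfl
lemma rowEdge_true {n : ℕ} (i : ZMod n) : rowEdge n true i = topEdge n i := rfl

lemma zmod_one_ne_zero {n : ℕ} (hn : 3 ≤ n) : (1 : ZMod n) ≠ 0 := by
  intro h
  haveI : NeZero n := ⟨by omega⟩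
  have h2 : ((1 : ℕ) : ZMod n) = 0 := by exact_mod_cast h
  rw [ZMod.natCast_eq_zero_iff] at h2
  have := Nat.le_of_dvd one_pos h2
  omega

lemma zmod_two_ne_zero {n : ℕ} (hn : 3 ≤ n) : (2 : ZMod n) ≠ 0 := by
  intro h
  haveI : NeZero n := ⟨by omega⟩
  have h2 : ((2 : ℕ) : ZMod n) = 0 := by exact_mod_cast h
  rw [ZMod.natCast_eq_zero_iff] at h2
  have := Nat.le_of_dvd two_pos h2
  omega

lemma prism_neighbor {n : ℕ} {i : ZMod n} {c : Bool} {y : PV n}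
    (h : (prismG n).Adj (i, c) y) :
    y = (i - 1, c) ∨ y = (i + 1, c) ∨ y = (i, !c) := by
  obtain ⟨y1, y2⟩ := y
  rw [prismG, SimpleGraph.fromRel_adj] at h
  obtain ⟨-, h⟩ := h
  rcases h with (⟨h1, h2⟩ | ⟨h1, h2⟩) | (⟨h1, h2⟩ | ⟨h1, h2⟩)
  · right; right
    simp only [Prod.mk.injEq] at *
    exact ⟨h1.symm, by cases c <;> cases y2 <;> simp_all⟩
  · right; left
    simp only [Prod.mk.injEq] at *
    exact ⟨h2, h1.symm⟩
  · right; right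
    simp only [Prod.mk.injEq] at *
    exact ⟨h1, by cases c <;> cases y2 <;> simp_all⟩
  · left
    simp only [Prod.mk.injEq] at *
    exact ⟨by rw [h2]; ring, h1⟩

lemma edge_to_left {n : ℕ} (i : ZMod n) (c : Bool) :
    s(((i, c) : PV n), ((i - 1, c) : PV n)) = rowEdge n c (i - 1) := by
  rw [rowEdge, Sym2.eq_swap, sub_add_cancel]

lemma edge_to_right {n : ℕ} (i : ZMod n) (c : Bool) :
    s(((i, c) : PV n), ((i + 1, c) : PV n)) = rowEdge n c i := rfl

lemma edge_to_pillar {n : ℕ} (i : ZMod n) (c : Bool) :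
    s(((i, c) : PV n), ((i, !c) : PV n)) = pillar n i := by
  cases c
  · rfl
  · rw [pillar, Sym2.eq_swap]; rfl

section CycleDegree
variable {V : Type*} [DecidableEq V] {G : SimpleGraph V}

lemma path_end_unique : ∀ {u w : V} (p : G.Walk u w), p.IsPath →
    ∀ y z, s(w,y) ∈ p.edges → s(w,z) ∈ p.edges → y = z := by
  intro u w p
  induction p with
  | nil => intro _ y z hy; simp at hy
  | @cons a b w h p ih =>
    intro hp y z hy hz
    have hpp : p.IsPath := hp.of_cons
    have hwa : w ≠ a := by
      intro hwa
      subst hwa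
      exact (Walk.cons_isPath_iff h p).mp hp |>.2 (p.end_mem_support)
    rw [Walk.edges_cons, List.mem_cons] at hy hz
    rcases hy with hy | hy <;> rcases hz with hz | hz
    · rw [Sym2.eq_iff] at hy hz
      rcases hy with ⟨h1,h2⟩|⟨h1,h2⟩ <;> rcases hz with ⟨h3,h4⟩|⟨h3,h4⟩ <;> first
        | (exact h2.trans h4.symm) | (exact absurd h1 hwa) | (exact absurd h3 hwa)
    · rw [Sym2.eq_iff] at hy
      rcases hy with ⟨h1,h2⟩|⟨h1,h2⟩
      · exact absurd h1 hwa
      · subst h1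
        have : p = Walk.nil := (Walk.isPath_iff_eq_nil (p := p)).mp hpp
        subst this; simp at hz
    · rw [Sym2.eq_iff] at hz
      rcases hz with ⟨h1,h2⟩|⟨h1,h2⟩
      · exact absurd h1 hwa
      · subst h1
        have : p = Walk.nil := (Walk.isPath_iff_eq_nil (p := p)).mp hpp
        subst this; simp at hy
    · exact ih hpp y z hy hz

lemma cycle_at_most_two {v x a b c : V} {C : G.Walk v v} (hC : C.IsCycle)
    (hab : a ≠ b) (hac : a ≠ c) (hbc : b ≠ c)
    (ha : s(x,a) ∈ C.edges) (hb : s(x,b) ∈ C.edges) (hc : s(x,c) ∈ C.edges) : False := by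
  have hx : x ∈ C.support := C.fst_mem_support_of_mem_edges ha
  have hrot : (C.rotate x hx).edges ~r C.edges := C.rotate_edges x hx
  have hmem : ∀ e, e ∈ (C.rotate x hx).edges ↔ e ∈ C.edges := fun e => hrot.mem_iff
  have hCr : (C.rotate x hx).IsCycle := hC.rotate hx
  set D := C.rotate x hx with hD
  clear_value D
  cases D with
  | nil => exact hCr.ne_nil rfl
  | @cons _ u _ h q =>
    rw [Walk.cons_isCycle_iff] at hCr
    obtain ⟨hq, hne⟩ := hCr
    have key : ∀ y, y ≠ x → s(x,y) ∈ C.edges → y = u ∨ s(x,y) ∈ q.edges := by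
      intro y hy hmemy
      rw [← hmem, Walk.edges_cons, List.mem_cons] at hmemy
      rcases hmemy with h1 | h1
      · rw [Sym2.eq_iff] at h1
        rcases h1 with ⟨_,h2⟩|⟨h2,_⟩
        · exact Or.inl h2
        · exact absurd h2 h.ne
      · exact Or.inr h1
    have hxa : a ≠ x := fun h' => by subst h'; exact G.irrefl (C.adj_of_mem_edges ha)
    have hxb : b ≠ x := fun h' => by subst h'; exact G.irrefl (C.adj_of_mem_edges hb)
    have hxc : c ≠ x := fun h' => by subst h'; exact G.irrefl (C.adj_of_mem_edges hc)
    rcases key a hxa ha with h1|h1 <;> rcases key b hxb hb with h2|h2 <;>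
      rcases key c hxc hc with h3|h3
    · exact hab (h1.trans h2.symm)
    · exact hab (h1.trans h2.symm)
    · exact hac (h1.trans h3.symm)
    · exact hbc (path_end_unique q hq b c h2 h3)
    · exact hbc (h2.trans h3.symm)
    · exact hac (path_end_unique q hq a c h1 h3)
    · exact hab (path_end_unique q hq a b h1 h2)
    · exact hab (path_end_unique q hq a b h1 h2)

lemma cycle_at_least_two {v x : V} {C : G.Walk v v} (hC : C.IsCycle)
    (hx : x ∈ C.support) : ∃ a b, a ≠ b ∧ s(x,a) ∈ C.edges ∧ s(x,b) ∈ C.edges := by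
  have hrot : (C.rotate x hx).edges ~r C.edges := C.rotate_edges x hx
  have hmem : ∀ e, e ∈ (C.rotate x hx).edges ↔ e ∈ C.edges := fun e => hrot.mem_iff
  have hCr : (C.rotate x hx).IsCycle := hC.rotate hx
  have hlen : 3 ≤ (C.rotate x hx).length := hCr.three_le_length
  set D := C.rotate x hx with hD
  clear_value D
  cases D with
  | nil => exact absurd rfl hCr.ne_nil
  | @cons _ u _ h q =>
    rw [Walk.cons_isCycle_iff] at hCr
    obtain ⟨hq, hne⟩ := hCr
    have hqlen : 0 < q.length := by
      simp only [Walk.length_cons] at hlen; omega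
    have hlast : s(x, q.reverse.getVert 1) ∈ q.edges := by
      have h0 : s(q.reverse.getVert 0, q.reverse.getVert 1) ∈ q.reverse.edges :=
        (q.reverse.mem_edges_toSubgraph).mp
          (Subgraph.mem_edgeSet.mpr (q.reverse.toSubgraph_adj_getVert
            (by rw [Walk.length_reverse]; omega)))
      rw [Walk.getVert_zero] at h0
      rwa [Walk.edges_reverse, List.mem_reverse] at h0
    refine ⟨u, q.reverse.getVert 1, ?_, ?_, ?_⟩
    · intro hequ
      exact absurd hlast (hequ ▸ hne)
    · rw [← hmem, Walk.edges_cons]; exact List.mem_cons_self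
    · rw [← hmem, Walk.edges_cons]
      exact List.mem_cons_of_mem _ hlast
end CycleDegree

section Main
variable {n : ℕ} {v : PV n} {C : (prismG n).Walk v v}

lemma vertex_distinct {n : ℕ} (hn : 3 ≤ n) (i : ZMod n) (c : Bool) :
    ((i - 1, c) : PV n) ≠ (i + 1, c) ∧ ((i - 1, c) : PV n) ≠ (i, !c) ∧
      ((i + 1, c) : PV n) ≠ (i, !c) := by
  refine ⟨?_, ?_, ?_⟩
  · intro h
    rw [Prod.mk.injEq] at h
    apply zmod_two_ne_zero hn
    have : i + 1 - (i - 1) = 0 := by rw [← h.1]; ring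
    calc (2 : ZMod n) = i + 1 - (i - 1) := by ring
    _ = 0 := this
  · intro h; rw [Prod.mk.injEq] at h; exact (Bool.not_ne_self c).symm h.2
  · intro h; rw [Prod.mk.injEq] at h; exact (Bool.not_ne_self c).symm h.2

lemma at_least_two (hn : 3 ≤ n) (hC : C.IsHamiltonianCycle) (c : Bool) (i : ZMod n) :
    (rowEdge n c (i-1) ∈ C.edges ∧ rowEdge n c i ∈ C.edges) ∨
    (rowEdge n c (i-1) ∈ C.edges ∧ pillar n i ∈ C.edges) ∨
    (rowEdge n c i ∈ C.edges ∧ pillar n i ∈ C.edges) := by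
  classical
  obtain ⟨a, b, hab, ha, hb⟩ := cycle_at_least_two hC.isCycle (hC.mem_support (i, c))
  have cla : ∀ y, s(((i,c) : PV n), y) ∈ C.edges →
      (y = ((i-1,c) : PV n) ∧ rowEdge n c (i-1) ∈ C.edges) ∨
      (y = ((i+1,c) : PV n) ∧ rowEdge n c i ∈ C.edges) ∨
      (y = ((i,!c) : PV n) ∧ pillar n i ∈ C.edges) := by
    intro y hy
    rcases prism_neighbor (C.adj_of_mem_edges hy) with h | h | h <;> subst h
    · exact Or.inl ⟨rfl, by rwa [edge_to_left] at hy⟩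
    · exact Or.inr (Or.inl ⟨rfl, by rwa [edge_to_right] at hy⟩)
    · exact Or.inr (Or.inr ⟨rfl, by rwa [edge_to_pillar] at hy⟩)
  rcases cla a ha with ⟨e1, m1⟩ | ⟨e1, m1⟩ | ⟨e1, m1⟩ <;>
    rcases cla b hb with ⟨e2, m2⟩ | ⟨e2, m2⟩ | ⟨e2, m2⟩ <;>
    first
      | (exact absurd (e1.trans e2.symm) hab)
      | tauto

lemma at_most_two (hn : 3 ≤ n) (hC : C.IsHamiltonianCycle) (c : Bool) (i : ZMod n) :
    ¬(rowEdge n c (i-1) ∈ C.edges ∧ rowEdge n c i ∈ C.edges ∧ pillar n i ∈ C.edges) := by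
  classical
  rintro ⟨h1, h2, h3⟩
  obtain ⟨d1, d2, d3⟩ := vertex_distinct hn i c
  exact cycle_at_most_two hC.isCycle d1 d2 d3
    (by rwa [edge_to_left]) (by rwa [edge_to_right]) (by rwa [edge_to_pillar])

lemma pillar_xor (hn : 3 ≤ n) (hC : C.IsHamiltonianCycle) (c : Bool) (i : ZMod n) :
    (pillar n i ∈ C.edges ↔ ¬(rowEdge n c (i-1) ∈ C.edges ↔ rowEdge n c i ∈ C.edges)) := by
  have h1 := at_least_two hn hC c i
  have h2 := at_most_two hn hC c i
  tauto

end Main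

lemma walk_const {V' : Type*} {G' : SimpleGraph V'} (f : V' → Prop) :
    ∀ {a b : V'} (p : G'.Walk a b), (∀ x y, s(x,y) ∈ p.edges → (f x ↔ f y)) →
    ∀ x ∈ p.support, (f x ↔ f a) := by
  intro a b p
  induction p with
  | nil => intro _ x hx; simp at hx; subst hx; rfl
  | @cons a m b h p ih =>
    intro hedge x hx
    rw [Walk.support_cons, List.mem_cons] at hx
    rcases hx with rfl | hx
    · rfl
    · have h1 : f x ↔ f m :=
        ih (fun x y hxy => hedge x y (by rw [Walk.edges_cons]; exact List.mem_cons_of_mem _ hxy)) x hx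
      have h2 : f a ↔ f m := hedge a m (by rw [Walk.edges_cons]; exact List.mem_cons_self)
      rw [h1, h2]

lemma prism_edge_class {n : ℕ} {x y : PV n} (h : (prismG n).Adj x y) :
    (x.1 = y.1 ∧ s(x,y) = pillar n x.1) ∨
    (x.2 = y.2 ∧ y.1 = x.1 + 1 ∧ s(x,y) = rowEdge n x.2 x.1) ∨
    (x.2 = y.2 ∧ x.1 = y.1 + 1 ∧ s(x,y) = rowEdge n y.2 y.1) := by
  obtain ⟨x1, x2⟩ := x
  obtain ⟨y1, y2⟩ := y
  rw [prismG, SimpleGraph.fromRel_adj] at h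
  obtain ⟨hne, h⟩ := h
  rcases h with (⟨h1, h2⟩ | ⟨h1, h2⟩) | (⟨h1, h2⟩ | ⟨h1, h2⟩) <;> simp only at h1 h2
  · subst h1
    left
    refine ⟨rfl, ?_⟩
    cases x2 <;> cases y2 <;> simp_all [pillar, Sym2.eq_swap]
  · subst h1; subst h2
    right; left; exact ⟨rfl, rfl, rfl⟩
  · subst h1
    left
    refine ⟨rfl, ?_⟩
    cases x2 <;> cases y2 <;> simp_all [pillar, Sym2.eq_swap]
  · subst h1; subst h2
    right; right
    exact ⟨rfl, rfl, Sym2.eq_swap⟩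

lemma no_pillar_absurd {n : ℕ} (hn : 3 ≤ n) {v : PV n} {C : (prismG n).Walk v v}
    (hC : C.IsHamiltonianCycle) (hp : ∀ i, pillar n i ∉ C.edges) : False := by
  have hedge : ∀ x y : PV n, s(x,y) ∈ C.edges → (x.2 = true ↔ y.2 = true) := by
    intro x y hxy
    rcases prism_edge_class (C.adj_of_mem_edges hxy) with ⟨h1, h2⟩ | ⟨h1, _⟩ | ⟨h1, _⟩
    · rw [h2] at hxy; exact absurd hxy (hp _)
    · rw [h1]
    · rw [h1]
  have h1 := walk_const (fun x : PV n => x.2 = true) C hedge (0, true) (hC.mem_support _)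
  have h2 := walk_const (fun x : PV n => x.2 = true) C hedge (0, false) (hC.mem_support _)
  simp only at h1 h2
  exact Bool.false_ne_true (h2.mpr (h1.mp trivial))

lemma step_side {n : ℕ} (hn : 3 ≤ n) {j k : ZMod n} (hjk : j ≠ k) (i : ZMod n)
    (hij : i ≠ j) (hik : i ≠ k) :
    ((1 ≤ (i - j).val ∧ (i - j).val ≤ (k - j).val) ↔
      (1 ≤ (i + 1 - j).val ∧ (i + 1 - j).val ≤ (k - j).val)) := by
  haveI : NeZero n := ⟨by omega⟩
  haveI : Fact (1 < n) := ⟨by omega⟩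
  set a := (i - j).val with ha
  set e := (k - j).val with he
  have han : a < n := ZMod.val_lt _
  have hen : e < n := ZMod.val_lt _
  have ha0 : a ≠ 0 := by
    rw [ha, Ne, ZMod.val_eq_zero, sub_eq_zero]; exact hij
  have he0 : e ≠ 0 := by
    rw [he, Ne, ZMod.val_eq_zero, sub_eq_zero]; exact fun h => hjk h.symm
  have hae : a ≠ e := fun h => hik (by
    have := ZMod.val_injective n (ha ▸ he ▸ h)
    have : i - j + j = k - j + j := by rw [this]
    simpa [sub_add_cancel] using this)
  have hstep : (i + 1 - j).val = (a + 1) % n := by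
    have : i + 1 - j = (i - j) + 1 := by ring
    rw [this, ZMod.val_add, ZMod.val_one]
  rw [hstep]
  rcases Nat.lt_or_ge (a + 1) n with hlt | hge
  · rw [Nat.mod_eq_of_lt hlt]; omega
  · have : a + 1 = n := by omega
    rw [this, Nat.mod_self]
    omega

lemma cut_absurd {n : ℕ} (hn : 3 ≤ n) {v : PV n} {C : (prismG n).Walk v v}
    (hC : C.IsHamiltonianCycle) {j k : ZMod n} (hjk : j ≠ k)
    (hbj : baseEdge n j ∉ C.edges) (htj : topEdge n j ∉ C.edges)
    (hbk : baseEdge n k ∉ C.edges) (htk : topEdge n k ∉ C.edges) : False := by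
  haveI : NeZero n := ⟨by omega⟩
  set f : PV n → Prop := fun x => 1 ≤ (x.1 - j).val ∧ (x.1 - j).val ≤ (k - j).val with hf
  have hrow : ∀ (c : Bool) (m : ZMod n), rowEdge n c m ∈ C.edges → m ≠ j ∧ m ≠ k := by
    intro c m hm
    constructor <;> rintro rfl <;> cases c
    · exact hbj (by rwa [rowEdge_false] at hm)
    · exact htj (by rwa [rowEdge_true] at hm)
    · exact hbk (by rwa [rowEdge_false] at hm)
    · exact htk (by rwa [rowEdge_true] at hm)
  have hedge : ∀ x y : PV n, s(x,y) ∈ C.edges → (f x ↔ f y) := by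
    intro x y hxy
    rcases prism_edge_class (C.adj_of_mem_edges hxy) with ⟨h1, _⟩ | ⟨h1, h2, h3⟩ | ⟨h1, h2, h3⟩
    · rw [hf]; simp only [h1]
    · rw [h3] at hxy
      obtain ⟨hj', hk'⟩ := hrow _ _ hxy
      rw [hf]; simp only [h2]
      exact step_side hn hjk x.1 hj' hk'
    · rw [h3] at hxy
      obtain ⟨hj', hk'⟩ := hrow _ _ hxy
      rw [hf]; simp only [h2]
      exact (step_side hn hjk y.1 hj' hk').symm
  have h1 := walk_const f C hedge ((j, false) : PV n) (hC.mem_support _)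
  have h2 := walk_const f C hedge ((k, false) : PV n) (hC.mem_support _)
  rw [← h1] at h2
  have hfj : ¬ f (j, false) := by
    rw [hf]; simp [sub_self, ZMod.val_zero]
  have hfk : f (k, false) := by
    rw [hf]
    refine ⟨?_, le_refl _⟩
    have hne : (k - j) ≠ 0 := sub_ne_zero.mpr (Ne.symm hjk)
    have hv := (ZMod.val_eq_zero (k - j)).not.mpr hne
    show 1 ≤ (k - j).val
    omega
  exact hfj (h2.mp hfk)

lemma zmod_const {n : ℕ} (hn : 3 ≤ n) (Q : ZMod n → Prop)
    (hQ : ∀ i, Q (i + 1) ↔ Q i) (i : ZMod n) : Q i ↔ Q 0 := by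
  haveI : NeZero n := ⟨by omega⟩
  have key : ∀ m : ℕ, Q ((m : ℕ) : ZMod n) ↔ Q 0 := by
    intro m
    induction m with
    | zero => simp
    | succ m ih => push_cast; rw [hQ]; exact ih
  have := key i.val
  rwa [ZMod.natCast_rightInverse i] at this

/-- In the prism `C_n □ K_2` (`n ≥ 3`), every hamiltonian cycle contains
either exactly `2` pillar edges or all `n` pillar edges. -/
theorem stmt0 (n : ℕ) (hn : 3 ≤ n) {v : PV n} (C : (prismG n).Walk v v)
    (hC : C.IsHamiltonianCycle) :
    {i : ZMod n | pillar n i ∈ C.edges}.ncard = 2 ∨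
    {i : ZMod n | pillar n i ∈ C.edges}.ncard = n := by
  classical
  have h1z : (1 : ZMod n) ≠ 0 := zmod_one_ne_zero hn
  have hQstep : ∀ i : ZMod n,
      ((rowEdge n false (i+1) ∈ C.edges ↔ rowEdge n true (i+1) ∈ C.edges) ↔
       (rowEdge n false i ∈ C.edges ↔ rowEdge n true i ∈ C.edges)) := by
    intro i
    have hf := pillar_xor hn hC false (i+1)
    have ht := pillar_xor hn hC true (i+1)
    rw [add_sub_cancel_right] at hf ht
    tauto
  by_cases hQ0 : (rowEdge n false 0 ∈ C.edges ↔ rowEdge n true 0 ∈ C.edges)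
  · -- Case A
    have hA : ∀ i : ZMod n,
        (rowEdge n false i ∈ C.edges ↔ rowEdge n true i ∈ C.edges) := fun i =>
      (zmod_const hn
        (fun i => (rowEdge n false i ∈ C.edges ↔ rowEdge n true i ∈ C.edges))
        hQstep i).mpr hQ0
    have hsome : ¬ ∀ i : ZMod n, rowEdge n false i ∈ C.edges := by
      intro hall
      apply no_pillar_absurd hn hC
      intro i hpi
      exact (pillar_xor hn hC false i).mp hpi (iff_of_true (hall _) (hall _))
    obtain ⟨j, hj⟩ := not_forall.mp hsome
    have huniq : ∀ k, k ≠ j → rowEdge n false k ∈ C.edges := by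
      intro k hk
      by_contra hkk
      refine cut_absurd hn hC (Ne.symm hk) ?_ ?_ ?_ ?_
      · rwa [← rowEdge_false]
      · rw [← rowEdge_true]; exact fun h => hj ((hA j).mpr h)
      · rwa [← rowEdge_false]
      · rw [← rowEdge_true]; exact fun h => hkk ((hA k).mpr h)
    have hchar : ∀ m : ZMod n, (rowEdge n false m ∈ C.edges ↔ m ≠ j) := by
      intro m
      constructor
      · intro h hm; exact hj (hm ▸ h)
      · exact huniq m
    have hset : {i : ZMod n | pillar n i ∈ C.edges} = {j, j + 1} := by
      ext i
      simp only [Set.mem_setOf_eq, Set.mem_insert_iff, Set.mem_singleton_iff]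
      rw [pillar_xor hn hC false i, hchar i, hchar (i-1)]
      constructor
      · intro h
        by_cases hij : i = j
        · exact Or.inl hij
        · right
          have h1 : ¬(i - 1 ≠ j) := fun h' => h (iff_of_true h' hij)
          have h2 : i - 1 = j := not_not.mp h1
          rw [← h2, sub_add_cancel]
      · rintro (rfl | rfl) hiff
        · exact (hiff.mp (fun h' => h1z (sub_eq_self.mp h'))) rfl
        · exact (hiff.mpr (fun h' => h1z (add_eq_left.mp h')))
            (by rw [add_sub_cancel_right])
    left
    rw [hset]
    exact Set.ncard_pair (fun h => h1z (left_eq_add.mp h))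
  · -- Case B
    have hB : ∀ i : ZMod n,
        ¬(rowEdge n false i ∈ C.edges ↔ rowEdge n true i ∈ C.edges) := fun i h =>
      hQ0 ((zmod_const hn
        (fun i => (rowEdge n false i ∈ C.edges ↔ rowEdge n true i ∈ C.edges))
        hQstep i).mp h)
    have hall : ∀ i : ZMod n, pillar n i ∈ C.edges := by
      intro i
      by_contra hpi
      have hBiff : (rowEdge n false (i-1) ∈ C.edges ↔ rowEdge n false i ∈ C.edges) :=
        not_not.mp (fun h => hpi ((pillar_xor hn hC false i).mpr h))
      have hTiff : (rowEdge n true (i-1) ∈ C.edges ↔ rowEdge n true i ∈ C.edges) :=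
        not_not.mp (fun h => hpi ((pillar_xor hn hC true i).mpr h))
      have hal_f := at_least_two hn hC false i
      have hal_t := at_least_two hn hC true i
      have hqi := hB i
      have hqi1 := hB (i - 1)
      by_cases hBi : rowEdge n false i ∈ C.edges
      · have hB1 : rowEdge n false (i-1) ∈ C.edges := hBiff.mpr hBi
        have hT0 : rowEdge n true i ∉ C.edges := fun h => hqi (iff_of_true hBi h)
        have hT1 : rowEdge n true (i-1) ∉ C.edges := fun h => hqi1 (iff_of_true hB1 h)
        rcases hal_t with ⟨h, -⟩ | ⟨-, h⟩ | ⟨-, h⟩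
        · exact hT1 h
        · exact hpi h
        · exact hpi h
      · have hB1 : rowEdge n false (i-1) ∉ C.edges := fun h => hBi (hBiff.mp h)
        rcases hal_f with ⟨h, -⟩ | ⟨h, -⟩ | ⟨h, -⟩
        · exact hB1 h
        · exact hB1 h
        · exact hBi h
    right
    have hset : {i : ZMod n | pillar n i ∈ C.edges} = Set.univ :=
      Set.eq_univ_of_forall hall
    rw [hset, Set.ncard_univ, Nat.card_zmod]
end

section
/- In the prism graph C_n □ K_2 (n ≥ 3), if a hamiltonian cycle contains exactly 2 pillar edges, then these two pillars are consecutive, i.e., they are the pillars s_i t_i and s_{i+1} t_{i+1} of a common quadrangular face for some i ∈ Z_n. -/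
open SimpleGraph

lemma adj_base {n : ℕ} {m : ZMod n} {y : PV n}
    (h : (prismG n).Adj (m, false) y) :
    y = ((m, true) : PV n) ∨ y = (m + 1, false) ∨ y = (m - 1, false) := by
  obtain ⟨j, b⟩ := y
  simp only [prismG, fromRel_adj] at h
  obtain ⟨hne, h | h⟩ := h <;> rcases h with ⟨h1, h2⟩ | ⟨h1, h2⟩
  · cases b
    · simp at h2
    · left; simp [← h1]
  · right; left; simp [h2, ← h1]
  · cases b
    · simp at h2
    · left; simp [h1]
  · right; right
    simp [h1, eq_sub_of_add_eq h2.symm]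

lemma base_incident {n : ℕ} {m : ZMod n} {e : Sym2 (PV n)}
    (he : e ∈ (prismG n).edgeSet) (hm : ((m, false) : PV n) ∈ e) :
    e = pillar n m ∨ e = baseEdge n m ∨ e = baseEdge n (m - 1) := by
  revert he hm
  induction e using Sym2.ind with
  | _ a b =>
    intro he hm
    rw [mem_edgeSet] at he
    rw [Sym2.mem_iff] at hm
    rcases hm with rfl | rfl
    · rcases adj_base he with rfl | rfl | rfl
      · left; rfl
      · right; left; rfl
      · right; right
        rw [baseEdge, sub_add_cancel, Sym2.eq_swap]
    · rcases adj_base he.symm with rfl | rfl | rfl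
      · left; rw [pillar, Sym2.eq_swap]
      · right; left; rw [baseEdge, Sym2.eq_swap]
      · right; right
        rw [baseEdge, sub_add_cancel]

lemma exists_edge_of_mem_support_tail {V : Type*} {G : SimpleGraph V} {v x : V} :
    ∀ {u : V} (p : G.Walk u v), x ∈ p.support.tail → ∃ e ∈ p.edges, x ∈ e := by
  intro u p
  induction p with
  | nil => simp
  | @cons a b c h q ih =>
    intro hx
    simp only [Walk.support_cons, List.tail_cons] at hx
    rw [Walk.support_eq_cons] at hx
    rcases List.mem_cons.mp hx with rfl | hx'
    · exact ⟨s(a, x), by simp, by simp⟩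
    · obtain ⟨e, he, hxe⟩ := ih hx'
      exact ⟨e, by simp [he], hxe⟩

lemma countP_le_of_mem_imp {α : Type*} (l L : List α) (p : α → Bool) (hl : l.Nodup)
    (h : ∀ a ∈ l, p a = true → a ∈ L) : l.countP p ≤ L.length := by
  rw [List.countP_eq_length_filter]
  exact List.Subperm.length_le <|
    (hl.filter p).subperm (fun a ha => h a (List.mem_filter.mp ha).1 (List.mem_filter.mp ha).2)

lemma le_countP_of_sub {α : Type*} (l L : List α) (p : α → Bool) (hL : L.Nodup)
    (h : ∀ a ∈ L, a ∈ l ∧ p a = true) : L.length ≤ l.countP p := by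
  rw [List.countP_eq_length_filter]
  exact List.Subperm.length_le <|
    hL.subperm (fun a ha => List.mem_filter.mpr ⟨(h a ha).1, (h a ha).2⟩)


/-- If a hamiltonian cycle of the prism `C_n □ K_2` (`n ≥ 3`) contains
exactly two pillar edges, then they are the pillars `sᵢtᵢ` and `s_{i+1}t_{i+1}` of a common
quadrangular face, for some `i`. -/
theorem stmt1 (n : ℕ) (hn : 3 ≤ n) {v : PV n} (C : (prismG n).Walk v v)
    (hC : C.IsHamiltonianCycle)
    (h2 : {i : ZMod n | pillar n i ∈ C.edges}.ncard = 2) :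
    ∃ i : ZMod n, {j : ZMod n | pillar n j ∈ C.edges} = {i, i + 1} := by
  haveI : NeZero n := ⟨by omega⟩
  have h1ne : (1 : ZMod n) ≠ 0 := by
    intro h
    have h' : ((1 : ℕ) : ZMod n) = 0 := by exact_mod_cast h
    have hd := (ZMod.natCast_eq_zero_iff 1 n).mp h'
    have := Nat.le_of_dvd one_pos hd
    omega
  have h2ne : (2 : ZMod n) ≠ 0 := by
    intro h
    have h' : ((2 : ℕ) : ZMod n) = 0 := by exact_mod_cast h
    have hd := (ZMod.natCast_eq_zero_iff 2 n).mp h'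
    have := Nat.le_of_dvd (by omega) hd
    omega
  have htrail := hC.isCycle.isCircuit.isTrail
  have hnodup := htrail.edges_nodup
  have heven : ∀ x : PV n, Even (C.edges.countP fun e => x ∈ e) := fun x =>
    (htrail.even_countP_edges_iff x).mpr (fun h => absurd rfl h)
  have hpos : ∀ x : PV n, 0 < C.edges.countP fun e => x ∈ e := by
    intro x
    have hx : x ∈ C.support.tail :=
      Walk.support_tail_of_not_nil C hC.isCycle.not_nil ▸ hC.isHamiltonian_tail.mem_support x
    obtain ⟨e, he, hxe⟩ := exists_edge_of_mem_support_tail C hx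
    exact List.countP_pos_iff.mpr ⟨e, he, by simpa using hxe⟩
  have hpb : ∀ i j : ZMod n, pillar n i ≠ baseEdge n j := by
    intro i j h
    rw [pillar, baseEdge, Sym2.eq_iff] at h
    rcases h with ⟨-, h⟩ | ⟨-, h⟩ <;> simpa using congrArg Prod.snd h
  have hbb : ∀ p : ZMod n, baseEdge n p ≠ baseEdge n (p - 1) := by
    intro p h
    rw [baseEdge, baseEdge, sub_add_cancel, Sym2.eq_iff] at h
    rcases h with ⟨h1, -⟩ | ⟨-, h2⟩
    · have h1' : p = p - 1 := congrArg Prod.fst h1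
      have h0 : p - (p - 1) = 0 := sub_eq_zero.mpr h1'
      rw [sub_sub_cancel] at h0
      exact h1ne h0
    · have h2' : p + 1 = p - 1 := congrArg Prod.fst h2
      have h0 : (p + 1) - (p - 1) = 0 := sub_eq_zero.mpr h2'
      apply h2ne
      rw [← h0]; ring
  -- the incident-edge candidates
  have hcand : ∀ (m : ZMod n), ∀ e ∈ C.edges, (decide (((m, false) : PV n) ∈ e)) = true →
      e ∈ [pillar n m, baseEdge n m, baseEdge n (m - 1)] := by
    intro m e he hme
    have := base_incident (C.edges_subset_edgeSet he) (of_decide_eq_true hme)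
    simpa using this
  -- key: a missing base edge forces the two adjacent pillars
  have key : ∀ m : ZMod n, baseEdge n m ∉ C.edges → pillar n m ∈ C.edges := by
    intro m hbm
    by_contra hpm
    have hle : C.edges.countP (fun e => ((m, false) : PV n) ∈ e) ≤ 1 := by
      have := countP_le_of_mem_imp C.edges [baseEdge n (m - 1)] (fun e => decide (((m, false) : PV n) ∈ e)) hnodup ?_
      · simpa using this
      · intro e he hme
        have h3 := hcand m e he hme
        simp only [List.mem_cons, List.not_mem_nil, or_false] at h3
        rcases h3 with h | h | h
        · exact absurd (h ▸ he) hpm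
        · exact absurd (h ▸ he) hbm
        · simp [h]
    obtain ⟨c, hc⟩ := heven (m, false)
    have := hpos (m, false)
    omega
  have key2 : ∀ m : ZMod n, baseEdge n (m - 1) ∉ C.edges → pillar n m ∈ C.edges := by
    intro m hbm
    by_contra hpm
    have hle : C.edges.countP (fun e => ((m, false) : PV n) ∈ e) ≤ 1 := by
      have := countP_le_of_mem_imp C.edges [baseEdge n m] (fun e => decide (((m, false) : PV n) ∈ e)) hnodup ?_
      · simpa using this
      · intro e he hme
        have h3 := hcand m e he hme
        simp only [List.mem_cons, List.not_mem_nil, or_false] at h3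
        rcases h3 with h | h | h
        · exact absurd (h ▸ he) hpm
        · simp [h]
        · exact absurd (h ▸ he) hbm
    obtain ⟨c, hc⟩ := heven (m, false)
    have := hpos (m, false)
    omega
  -- existence of a missing base edge
  obtain ⟨p, hp⟩ : {i : ZMod n | pillar n i ∈ C.edges}.Nonempty :=
    Set.nonempty_of_ncard_ne_zero (by omega)
  have hmiss : ∃ m : ZMod n, baseEdge n m ∉ C.edges := by
    by_contra hall
    push_neg at hall
    have hge : 3 ≤ C.edges.countP (fun e => ((p, false) : PV n) ∈ e) := by
      have := le_countP_of_sub C.edges [pillar n p, baseEdge n p, baseEdge n (p - 1)] (fun e => decide (((p, false) : PV n) ∈ e)) ?_ ?_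
      · simpa using this
      · refine List.nodup_cons.mpr ⟨?_, List.nodup_cons.mpr ⟨?_, List.nodup_singleton _⟩⟩
        · simp only [List.mem_cons, List.mem_singleton]
          rintro (h | h | h)
          · exact hpb _ _ h
          · exact hpb _ _ h
          · simp at h
        · simpa using hbb p
      · intro e he
        rcases List.mem_cons.mp he with rfl | he'
        · exact ⟨hp, by simp [pillar]⟩
        rcases List.mem_cons.mp he' with rfl | he''
        · exact ⟨hall _, by simp [baseEdge]⟩
        · rw [List.mem_singleton] at he''
          subst he''
          refine ⟨hall _, ?_⟩
          simp only [baseEdge, sub_add_cancel]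
          simp
    have hle : C.edges.countP (fun e => ((p, false) : PV n) ∈ e) ≤ 3 := by
      have := countP_le_of_mem_imp C.edges [pillar n p, baseEdge n p, baseEdge n (p - 1)]
        (fun e => decide (((p, false) : PV n) ∈ e)) hnodup (hcand p)
      simpa using this
    obtain ⟨c, hc⟩ := heven (p, false)
    omega
  obtain ⟨m, hm⟩ := hmiss
  have hpm : pillar n m ∈ C.edges := key m hm
  have hpm1 : pillar n (m + 1) ∈ C.edges := by
    apply key2
    rwa [show m + 1 - 1 = m by ring]
  have hne : m ≠ m + 1 := fun h => h1ne (left_eq_add.mp h)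
  have hsub : ({m, m + 1} : Set (ZMod n)) ⊆ {j : ZMod n | pillar n j ∈ C.edges} := by
    intro j hj
    rcases hj with rfl | hj
    · exact hpm
    · rw [Set.mem_singleton_iff] at hj
      subst hj
      exact hpm1
  have heq := Set.eq_of_subset_of_ncard_le hsub
    (by rw [h2, Set.ncard_pair hne]) (Set.toFinite _)
  exact ⟨m, heq.symm⟩
end

section
/- The Tutte Fragment has no hamiltonian path with endpoints a and b. -/
open SimpleGraph

/-- Boolean adjacency of the Tutte Fragment. -/
def adjB (x y : Fin 15) : Bool := x ≠ y && ((x,y) ∈ TFedges || (y,x) ∈ TFedges)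

/-- All one-step extensions of a (reversed) path. -/
def ext : List (Fin 15) → List (List (Fin 15))
  | [] => []
  | a :: l => ((List.finRange 15).filter (fun y => adjB a y && !(y ∈ (a :: l)))).map (· :: a :: l)

/-- All simple paths of length `n` starting at vertex `0`, stored in reverse. -/
def paths : ℕ → List (List (Fin 15))
  | 0 => [[0]]
  | n+1 => (paths n).flatMap ext

theorem key : ((paths 14).all (fun l => l.head? ≠ some 1)) = true := by decide

theorem adjB_comm : ∀ x y : Fin 15, adjB x y = adjB y x := by decide

theorem adj_adjB {x y : Fin 15} (h : TF.Adj x y) : adjB x y = true := by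
  rw [TF, SimpleGraph.fromRel_adj] at h
  simp only [adjB, Bool.and_eq_true, Bool.or_eq_true, decide_eq_true_iff, ne_eq,
    bne_iff_ne, List.elem_iff]
  tauto

theorem mem_paths : ∀ (n : ℕ) (l : List (Fin 15)), l.length = n + 1 →
    l.Chain' (fun x y => adjB x y = true) → l.Nodup → l.getLast? = some 0 → l ∈ paths n := by
  intro n
  induction n with
  | zero =>
    rintro (_ | ⟨a, (_ | _)⟩) hlen hch hnd hlast <;> simp_all [paths]
  | succ n ih =>
    rintro (_ | ⟨a, (_ | ⟨b, t⟩)⟩) hlen hch hnd hlast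
    · simp at hlen
    · simp at hlen
    · have hch' := hch
      rw [List.Chain', List.isChain_cons_cons] at hch'
      obtain ⟨hab, hchbt⟩ := hch'
      have hnd' := hnd
      rw [List.nodup_cons] at hnd'
      obtain ⟨hamem, hndbt⟩ := hnd'
      have hlast' : (b :: t).getLast? = some 0 := by
        rwa [List.getLast?_cons_cons] at hlast
      have hlen' : (b :: t).length = n + 1 := by simpa using hlen
      have hmem := ih (b :: t) hlen' hchbt hndbt hlast'
      show _ ∈ paths (n+1)
      rw [paths, List.mem_flatMap]
      refine ⟨b :: t, hmem, ?_⟩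
      rw [ext, List.mem_map]
      refine ⟨a, ?_, rfl⟩
      rw [List.mem_filter]
      refine ⟨List.mem_finRange a, ?_⟩
      simp only [Bool.and_eq_true, Bool.not_eq_true']
      constructor
      · rw [adjB_comm]; exact hab
      · simpa using hamem

/-- The Tutte Fragment has no hamiltonian path with endpoints `a` and `b`. -/
theorem stmt6 : ¬ ∃ p : TF.Walk 0 1, p.IsHamiltonian := by
  rintro ⟨p, hp⟩
  set r := p.reverse.support with hr
  have hch : r.Chain' (fun x y => adjB x y = true) :=
    (SimpleGraph.Walk.isChain_adj_support p.reverse).imp fun _ _ h => adj_adjB h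
  have hnd : r.Nodup := by
    have : p.reverse.IsPath := hp.isPath.reverse
    exact this.support_nodup
  have hlen : r.length = 15 := by
    rw [hr, SimpleGraph.Walk.length_support, SimpleGraph.Walk.length_reverse,
      hp.length_eq]
    simp
  have hlast : r.getLast? = some 0 := by
    rw [hr, SimpleGraph.Walk.support_reverse, List.getLast?_reverse]
    rw [p.support_eq_cons]; rfl
  have hmem := mem_paths 14 r (by omega) hch hnd hlast
  have hhead : r.head? = some 1 := by
    rw [hr, p.reverse.support_eq_cons]; rfl
  have := List.all_eq_true.mp key r hmem
  simp [hhead] at this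
end

section
/- The Tutte Fragment has exactly two hamiltonian paths with endpoints a and c, and exactly four hamiltonian paths with endpoints b and c. -/
open SimpleGraph

instance : DecidableRel TF.Adj := fun x y =>
  decidable_of_iff _ (SimpleGraph.fromRel_adj _ x y).symm

/-- Neighbour lists of `TF`, in the edge-list order. -/
def nbrs (x : Fin 15) : List (Fin 15) :=
  TFedges.flatMap fun p => if p.1 = x then [p.2] else if p.2 = x then [p.1] else []

lemma mem_nbrs : ∀ x y : Fin 15, TF.Adj x y → y ∈ nbrs x := by decide

/-- DFS enumerating (reversed) hamiltonian supports ending at vertex `2`. -/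
def searchFrom : ℕ → List (Fin 15) → List (List (Fin 15))
  | 0, r => if r.head? = some 2 then [r] else []
  | fuel+1, [] => []
  | fuel+1, u :: r =>
      ((nbrs u).filter (fun v => !(List.contains (u :: r) v))).flatMap
        (fun v => searchFrom fuel (v :: u :: r))

lemma searchFrom_complete : ∀ (pre : List (Fin 15)) (u : Fin 15) (r : List (Fin 15)),
    List.Chain' TF.Adj (pre ++ u :: r) → (pre ++ u :: r).Nodup →
    (pre ++ u :: r).head? = some 2 →
    pre ++ u :: r ∈ searchFrom pre.length (u :: r) := by
  intro pre
  induction pre using List.reverseRecOn with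
  | nil =>
    intro u r _ _ hh
    simp only [List.nil_append] at hh ⊢
    simp [searchFrom, hh]
  | append_singleton q v ih =>
    intro u r hc hn hh
    have h1 : q ++ [v] ++ u :: r = q ++ (v :: u :: r) := by simp
    rw [h1] at hc hn hh
    have hsuf : (v :: u :: r) <:+ (q ++ (v :: u :: r)) := List.suffix_append q _
    have hadj : TF.Adj v u := (List.isChain_cons_cons.mp (hc.suffix hsuf)).1
    have hvnot : v ∉ u :: r := (List.nodup_cons.mp ((hn.sublist hsuf.sublist))).1
    have hIH := ih v (u :: r) hc hn hh
    have hlen : (q ++ [v]).length = q.length + 1 := by simp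
    rw [hlen, h1]
    show q ++ (v :: u :: r) ∈ searchFrom (q.length + 1) (u :: r)
    simp only [searchFrom, List.mem_flatMap]
    refine ⟨v, ?_, hIH⟩
    rw [List.mem_filter]
    exact ⟨mem_nbrs u v hadj.symm, by simpa using hvnot⟩

/-- The edge list of a walk, read off its support. -/
def edgesOf : List (Fin 15) → List (Sym2 (Fin 15))
  | a :: b :: t => s(a, b) :: edgesOf (b :: t)
  | _ => []

lemma walk_edges_eq {u v : Fin 15} (p : TF.Walk u v) : p.edges = edgesOf p.support := by
  induction p with
  | nil => rfl
  | @cons a b c h q ih =>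
    rw [SimpleGraph.Walk.edges_cons, SimpleGraph.Walk.support_cons, q.support_eq_cons]
    rw [q.support_eq_cons] at ih
    simpa [edgesOf] using ih

lemma classify {u : Fin 15} (p : TF.Walk u 2) (hp : p.IsHamiltonian) :
    p.support.reverse ∈ searchFrom 14 [u] := by
  have hsup : p.reverse.support = p.support.reverse := SimpleGraph.Walk.support_reverse p
  have hne : p.reverse.support ≠ [] := p.reverse.support_ne_nil
  have hdec : p.reverse.support.dropLast ++ [u] = p.reverse.support := by
    conv_rhs => rw [← List.dropLast_append_getLast hne]
    rw [p.reverse.getLast_support]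
  have hchain : List.Chain' TF.Adj p.reverse.support := p.reverse.isChain_adj_support
  have hnodup : p.reverse.support.Nodup := by
    rw [hsup, List.nodup_reverse]
    exact List.nodup_iff_count_le_one.mpr fun a => (hp a).le
  have hhead : p.reverse.support.head? = some 2 := by
    rw [p.reverse.support_eq_cons]; rfl
  have hlen : p.reverse.support.dropLast.length = 14 := by
    have h1 : p.length = 14 := by simpa using hp.length_eq
    rw [List.length_dropLast, hsup, List.length_reverse,
      SimpleGraph.Walk.length_support, h1]
  rw [← hdec] at hchain hnodup hhead
  have := searchFrom_complete p.reverse.support.dropLast u [] hchain hnodup hhead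
  rw [hdec, hlen, hsup] at this
  exact this


def L00 : List (Fin 15) := [0, 4, 9, 3, 14, 1, 7, 10, 12, 11, 5, 6, 13, 8, 2]

def L01 : List (Fin 15) := [0, 4, 9, 11, 5, 6, 13, 12, 10, 3, 14, 1, 7, 8, 2]

def L10 : List (Fin 15) := [1, 7, 8, 13, 12, 10, 3, 14, 0, 4, 9, 11, 5, 6, 2]

def L11 : List (Fin 15) := [1, 7, 10, 12, 11, 9, 3, 14, 0, 4, 5, 6, 13, 8, 2]

def L12 : List (Fin 15) := [1, 14, 0, 4, 5, 6, 13, 12, 11, 9, 3, 10, 7, 8, 2]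

def L13 : List (Fin 15) := [1, 14, 0, 4, 9, 3, 10, 7, 8, 13, 12, 11, 5, 6, 2]

lemma search0_eval : searchFrom 14 [0] = [L00.reverse, L01.reverse] := by decide

lemma search1_eval : searchFrom 14 [1] = [L10.reverse, L11.reverse, L12.reverse, L13.reverse] := by decide

def w00 : TF.Walk 0 2 := (SimpleGraph.Walk.cons (show TF.Adj 0 4 by decide) (SimpleGraph.Walk.cons (show TF.Adj 4 9 by decide) (SimpleGraph.Walk.cons (show TF.Adj 9 3 by decide) (SimpleGraph.Walk.cons (show TF.Adj 3 14 by decide) (SimpleGraph.Walk.cons (show TF.Adj 14 1 by decide) (SimpleGraph.Walk.cons (show TF.Adj 1 7 by decide) (SimpleGraph.Walk.cons (show TF.Adj 7 10 by decide) (SimpleGraph.Walk.cons (show TF.Adj 10 12 by decide) (SimpleGraph.Walk.cons (show TF.Adj 12 11 by decide) (SimpleGraph.Walk.cons (show TF.Adj 11 5 by decide) (SimpleGraph.Walk.cons (show TF.Adj 5 6 by decide) (SimpleGraph.Walk.cons (show TF.Adj 6 13 by decide) (SimpleGraph.Walk.cons (show TF.Adj 13 8 by decide) (SimpleGraph.Walk.cons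 (show TF.Adj 8 2 by decide) (SimpleGraph.Walk.nil : TF.Walk 2 2)))))))))))))))

lemma ham00 : w00.IsHamiltonian := by
  have h : ∀ a : Fin 15, (w00).support.count a = 1 := by decide
  exact h

def w01 : TF.Walk 0 2 := (SimpleGraph.Walk.cons (show TF.Adj 0 4 by decide) (SimpleGraph.Walk.cons (show TF.Adj 4 9 by decide) (SimpleGraph.Walk.cons (show TF.Adj 9 11 by decide) (SimpleGraph.Walk.cons (show TF.Adj 11 5 by decide) (SimpleGraph.Walk.cons (show TF.Adj 5 6 by decide) (SimpleGraph.Walk.cons (show TF.Adj 6 13 by decide) (SimpleGraph.Walk.cons (show TF.Adj 13 12 by decide) (SimpleGraph.Walk.cons (show TF.Adj 12 10 by decide) (SimpleGraph.Walk.cons (show TF.Adj 10 3 by decide) (SimpleGraph.Walk.cons (show TF.Adj 3 14 by decide) (SimpleGraph.Walk.cons (show TF.Adj 14 1 by decide) (SimpleGraph.Walk.cons (show TF.Adj 1 7 by decide) (SimpleGraph.Walk.cons (show TF.Adj 7 8 by decide) (SimpleGraph.Walk.cons (show TF.Adj 8 2 by decide) (SimpleGraph.Walk.nil : TF.Walk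 2 2)))))))))))))))

lemma ham01 : w01.IsHamiltonian := by
  have h : ∀ a : Fin 15, (w01).support.count a = 1 := by decide
  exact h

def w10 : TF.Walk 1 2 := (SimpleGraph.Walk.cons (show TF.Adj 1 7 by decide) (SimpleGraph.Walk.cons (show TF.Adj 7 8 by decide) (SimpleGraph.Walk.cons (show TF.Adj 8 13 by decide) (SimpleGraph.Walk.cons (show TF.Adj 13 12 by decide) (SimpleGraph.Walk.cons (show TF.Adj 12 10 by decide) (SimpleGraph.Walk.cons (show TF.Adj 10 3 by decide) (SimpleGraph.Walk.cons (show TF.Adj 3 14 by decide) (SimpleGraph.Walk.cons (show TF.Adj 14 0 by decide) (SimpleGraph.Walk.cons (show TF.Adj 0 4 by decide) (SimpleGraph.Walk.cons (show TF.Adj 4 9 by decide) (SimpleGraph.Walk.cons (show TF.Adj 9 11 by decide) (SimpleGraph.Walk.cons (show TF.Adj 11 5 by decide) (SimpleGraph.Walk.cons (show TF.Adj 5 6 by decide) (SimpleGraph.Walk.cons (show TF.Adj 6 2 by decide) (SimpleGraph.Walk.nil : TF.Walk 2 2)))))))))))))))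

lemma ham10 : w10.IsHamiltonian := by
  have h : ∀ a : Fin 15, (w10).support.count a = 1 := by decide
  exact h

def w11 : TF.Walk 1 2 := (SimpleGraph.Walk.cons (show TF.Adj 1 7 by decide) (SimpleGraph.Walk.cons (show TF.Adj 7 10 by decide) (SimpleGraph.Walk.cons (show TF.Adj 10 12 by decide) (SimpleGraph.Walk.cons (show TF.Adj 12 11 by decide) (SimpleGraph.Walk.cons (show TF.Adj 11 9 by decide) (SimpleGraph.Walk.cons (show TF.Adj 9 3 by decide) (SimpleGraph.Walk.cons (show TF.Adj 3 14 by decide) (SimpleGraph.Walk.cons (show TF.Adj 14 0 by decide) (SimpleGraph.Walk.cons (show TF.Adj 0 4 by decide) (SimpleGraph.Walk.cons (show TF.Adj 4 5 by decide) (SimpleGraph.Walk.cons (show TF.Adj 5 6 by decide) (SimpleGraph.Walk.cons (show TF.Adj 6 13 by decide) (SimpleGraph.Walk.cons (show TF.Adj 13 8 by decide) (SimpleGraph.Walk.cons (show TF.Adj 8 2 by decide) (SimpleGraph.Walk.nil : TF.Walk 2 2)))))))))))))))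

lemma ham11 : w11.IsHamiltonian := by
  have h : ∀ a : Fin 15, (w11).support.count a = 1 := by decide
  exact h

def w12 : TF.Walk 1 2 := (SimpleGraph.Walk.cons (show TF.Adj 1 14 by decide) (SimpleGraph.Walk.cons (show TF.Adj 14 0 by decide) (SimpleGraph.Walk.cons (show TF.Adj 0 4 by decide) (SimpleGraph.Walk.cons (show TF.Adj 4 5 by decide) (SimpleGraph.Walk.cons (show TF.Adj 5 6 by decide) (SimpleGraph.Walk.cons (show TF.Adj 6 13 by decide) (SimpleGraph.Walk.cons (show TF.Adj 13 12 by decide) (SimpleGraph.Walk.cons (show TF.Adj 12 11 by decide) (SimpleGraph.Walk.cons (show TF.Adj 11 9 by decide) (SimpleGraph.Walk.cons (show TF.Adj 9 3 by decide) (SimpleGraph.Walk.cons (show TF.Adj 3 10 by decide) (SimpleGraph.Walk.cons (show TF.Adj 10 7 by decide) (SimpleGraph.Walk.cons (show TF.Adj 7 8 by decide) (SimpleGraph.Walk.cons (show TF.Adj 8 2 by decide) (SimpleGraph.Walk.nil : TF.Walk 2 2)))))))))))))))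

lemma ham12 : w12.IsHamiltonian := by
  have h : ∀ a : Fin 15, (w12).support.count a = 1 := by decide
  exact h

def w13 : TF.Walk 1 2 := (SimpleGraph.Walk.cons (show TF.Adj 1 14 by decide) (SimpleGraph.Walk.cons (show TF.Adj 14 0 by decide) (SimpleGraph.Walk.cons (show TF.Adj 0 4 by decide) (SimpleGraph.Walk.cons (show TF.Adj 4 9 by decide) (SimpleGraph.Walk.cons (show TF.Adj 9 3 by decide) (SimpleGraph.Walk.cons (show TF.Adj 3 10 by decide) (SimpleGraph.Walk.cons (show TF.Adj 10 7 by decide) (SimpleGraph.Walk.cons (show TF.Adj 7 8 by decide) (SimpleGraph.Walk.cons (show TF.Adj 8 13 by decide) (SimpleGraph.Walk.cons (show TF.Adj 13 12 by decide) (SimpleGraph.Walk.cons (show TF.Adj 12 11 by decide) (SimpleGraph.Walk.cons (show TF.Adj 11 5 by decide) (SimpleGraph.Walk.cons (show TF.Adj 5 6 by decide) (SimpleGraph.Walk.cons (show TF.Adj 6 2 by decide) (SimpleGraph.Walk.nil : TF.Walk 2 2)))))))))))))))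

lemma ham13 : w13.IsHamiltonian := by
  have h : ∀ a : Fin 15, (w13).support.count a = 1 := by decide
  exact h


lemma neHelp {l1 l2 : List (Sym2 (Fin 15))} (e : Sym2 (Fin 15)) (h1 : e ∈ l1) (h2 : e ∉ l2) :
    {x : Sym2 (Fin 15) | x ∈ l1} ≠ {x : Sym2 (Fin 15) | x ∈ l2} := by
  intro h
  exact h2 ((Set.ext_iff.mp h e).mp h1)

lemma classify0 (p : TF.Walk 0 2) (hp : p.IsHamiltonian) :
    p.support = L00 ∨ p.support = L01 := by
  have h := classify p hp
  rw [search0_eval] at h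
  simp only [List.mem_cons, List.not_mem_nil, or_false] at h
  rcases h with h | h
  · left
    rw [← List.reverse_reverse p.support, h, List.reverse_reverse]
  · right
    rw [← List.reverse_reverse p.support, h, List.reverse_reverse]

lemma classify1 (p : TF.Walk 1 2) (hp : p.IsHamiltonian) :
    p.support = L10 ∨ p.support = L11 ∨ p.support = L12 ∨ p.support = L13 := by
  have h := classify p hp
  rw [search1_eval] at h
  simp only [List.mem_cons, List.not_mem_nil, or_false] at h
  rcases h with h | h | h | h
  · left; rw [← List.reverse_reverse p.support, h, List.reverse_reverse]
  · right; left; rw [← List.reverse_reverse p.support, h, List.reverse_reverse]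
  · right; right; left; rw [← List.reverse_reverse p.support, h, List.reverse_reverse]
  · right; right; right; rw [← List.reverse_reverse p.support, h, List.reverse_reverse]


/-- The Tutte Fragment has exactly two hamiltonian paths with endpoints
`a` and `c`, and exactly four with endpoints `b` and `c` (counted as edge sets, i.e. up to
reversal). -/
theorem stmt7 :
    {E : Set (Sym2 (Fin 15)) |
        ∃ p : TF.Walk 0 2, p.IsHamiltonian ∧ E = {e | e ∈ p.edges}}.ncard = 2 ∧
    {E : Set (Sym2 (Fin 15)) |
        ∃ p : TF.Walk 1 2, p.IsHamiltonian ∧ E = {e | e ∈ p.edges}}.ncard = 4 := by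
  constructor
  · have key : {E : Set (Sym2 (Fin 15)) |
        ∃ p : TF.Walk 0 2, p.IsHamiltonian ∧ E = {e | e ∈ p.edges}} =
        {{e | e ∈ edgesOf L00}, {e | e ∈ edgesOf L01}} := by
      ext E
      simp only [Set.mem_setOf_eq, Set.mem_insert_iff, Set.mem_singleton_iff]
      constructor
      · rintro ⟨p, hp, rfl⟩
        rcases classify0 p hp with h | h
        · left; rw [walk_edges_eq, h]
        · right; rw [walk_edges_eq, h]
      · rintro (rfl | rfl)
        · exact ⟨w00, ham00, by rw [walk_edges_eq]; rfl⟩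
        · exact ⟨w01, ham01, by rw [walk_edges_eq]; rfl⟩
    rw [key]
    exact Set.ncard_pair (neHelp s(3,9) (by decide) (by decide))
  · have key : {E : Set (Sym2 (Fin 15)) |
        ∃ p : TF.Walk 1 2, p.IsHamiltonian ∧ E = {e | e ∈ p.edges}} =
        {{e | e ∈ edgesOf L10}, {e | e ∈ edgesOf L11},
         {e | e ∈ edgesOf L12}, {e | e ∈ edgesOf L13}} := by
      ext E
      simp only [Set.mem_setOf_eq, Set.mem_insert_iff, Set.mem_singleton_iff]
      constructor
      · rintro ⟨p, hp, rfl⟩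
        rcases classify1 p hp with h | h | h | h
        · left; rw [walk_edges_eq, h]
        · right; left; rw [walk_edges_eq, h]
        · right; right; left; rw [walk_edges_eq, h]
        · right; right; right; rw [walk_edges_eq, h]
      · rintro (rfl | rfl | rfl | rfl)
        · exact ⟨w10, ham10, by rw [walk_edges_eq]; rfl⟩
        · exact ⟨w11, ham11, by rw [walk_edges_eq]; rfl⟩
        · exact ⟨w12, ham12, by rw [walk_edges_eq]; rfl⟩
        · exact ⟨w13, ham13, by rw [walk_edges_eq]; rfl⟩
    rw [key]
    rw [Set.ncard_insert_of_notMem ?h1 (Set.toFinite _),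
        Set.ncard_insert_of_notMem ?h2 (Set.toFinite _),
        Set.ncard_pair (neHelp s(2,8) (by decide) (by decide))]
    case h1 =>
      simp only [Set.mem_insert_iff, Set.mem_singleton_iff, not_or]
      exact ⟨neHelp s(2,6) (by decide) (by decide), neHelp s(1,7) (by decide) (by decide),
        neHelp s(1,7) (by decide) (by decide)⟩
    case h2 =>
      simp only [Set.mem_insert_iff, Set.mem_singleton_iff, not_or]
      exact ⟨neHelp s(1,7) (by decide) (by decide), neHelp s(1,7) (by decide) (by decide)⟩
end

section
/- If n is even, every hamiltonian cycle of C_n □ K_2 containing all n pillars alternates strictly between pillar edges and cycle edges, with the cycle edges alternating between the top cycle and the base cycle; consequently such a cycle has exactly n/2 top-cycle edges and n/2 base-cycle edges. -/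
open SimpleGraph

/-! ### Auxiliary lemmas for `stmt17` -/

namespace SimpleGraph.Walk
variable {V : Type*} [DecidableEq V] {G : SimpleGraph V}

omit [DecidableEq V] in
lemma IsCycle.twoNbrs_start {u : V} {c : G.Walk u u} (hc : c.IsCycle) :
    ∃ a b, a ≠ b ∧ s(u, a) ∈ c.edges ∧ s(u, b) ∈ c.edges ∧
      ∀ y, s(u, y) ∈ c.edges → y = a ∨ y = b := by
  cases c with
  | nil => exact absurd rfl hc.ne_nil
  | @cons _ w _ h p =>
    rw [cons_isCycle_iff] at hc
    obtain ⟨hp, hne⟩ := hc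
    have hpr : p.reverse.IsPath := hp.reverse
    have hune : u ≠ w := h.ne
    have hnn : ¬ p.reverse.Nil := by
      intro hnil
      exact hune (Walk.Nil.eq hnil)
    obtain ⟨z, h', q, hq⟩ := Walk.not_nil_iff.mp hnn
    have hz : s(u, z) ∈ p.edges := by
      rw [← List.mem_reverse, ← edges_reverse, hq]
      simp
    have huq : u ∉ q.support := by
      have := hpr.support_nodup
      rw [hq, support_cons, List.nodup_cons] at this
      exact this.1
    refine ⟨w, z, ?_, ?_, ?_, ?_⟩
    · rintro rfl; exact hne hz
    · simp
    · simp [hz]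
    · intro y hy
      simp only [edges_cons, List.mem_cons] at hy
      rcases hy with hy | hy
      · left
        rw [Sym2.eq_iff] at hy
        rcases hy with ⟨_, h2⟩ | ⟨h1, _⟩
        · exact h2
        · exact absurd h1 hune
      · right
        rw [← List.mem_reverse, ← edges_reverse, hq] at hy
        simp only [edges_cons, List.mem_cons] at hy
        rcases hy with hy | hy
        · rw [Sym2.eq_iff] at hy
          rcases hy with ⟨_, h2⟩ | ⟨h1, _⟩
          · exact h2
          · exact absurd h1 h'.ne
        · exact absurd (q.fst_mem_support_of_mem_edges hy) huq

lemma IsCycle.twoNbrs {u x : V} {c : G.Walk u u} (hc : c.IsCycle) (hx : x ∈ c.support) :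
    ∃ a b, a ≠ b ∧ s(x, a) ∈ c.edges ∧ s(x, b) ∈ c.edges ∧
      ∀ y, s(x, y) ∈ c.edges → y = a ∨ y = b := by
  obtain ⟨a, b, hab, ha, hb, huniq⟩ := (hc.rotate hx).twoNbrs_start
  have hmem : ∀ e, e ∈ (c.rotate _ hx).edges ↔ e ∈ c.edges :=
    fun e => (c.rotate_edges _ hx).mem_iff
  exact ⟨a, b, hab, (hmem _).mp ha, (hmem _).mp hb, fun y hy => huniq y ((hmem _).mpr hy)⟩

lemma IsCycle.onlyTwo {u x : V} {c : G.Walk u u} (hc : c.IsCycle) (hx : x ∈ c.support)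
    {p q : V} (hpq : p ≠ q) (hp : s(x, p) ∈ c.edges) (hq : s(x, q) ∈ c.edges) :
    ∀ y, s(x, y) ∈ c.edges → y = p ∨ y = q := by
  obtain ⟨a, b, hab, _, _, huniq⟩ := hc.twoNbrs hx
  intro y hy
  have h1 := huniq p hp
  have h2 := huniq q hq
  have h3 := huniq y hy
  rcases h1 with rfl | rfl <;> rcases h2 with rfl | rfl <;> rcases h3 with rfl | rfl <;> tauto

end SimpleGraph.Walk

lemma prism_adj_cases {n : ℕ} {u w : PV n} (h : (prismG n).Adj u w) :
    w = (u.1, !u.2) ∨ w = (u.1 + 1, u.2) ∨ w = (u.1 - 1, u.2) := by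
  obtain ⟨i, b⟩ := u; obtain ⟨j, c⟩ := w
  rw [prismG, fromRel_adj] at h
  obtain ⟨hne, h | h⟩ := h <;> rcases h with ⟨h1, h2⟩ | ⟨h1, h2⟩
  · left; cases b <;> cases c <;> simp_all
  · right; left; simp_all
  · left; cases b <;> cases c <;> simp_all
  · right; right
    have : j = i - 1 := eq_sub_of_add_eq h2.symm
    simp_all

lemma twoNe {n : ℕ} (hn : 3 ≤ n) (j : ZMod n) : (j + 1 : ZMod n) ≠ j - 1 := by
  haveI : NeZero n := ⟨by omega⟩
  intro h
  have h2 : ((2 : ℕ) : ZMod n) = 0 := by push_cast; linear_combination h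
  have := (ZMod.natCast_eq_zero_iff 2 n).mp h2
  have := Nat.le_of_dvd (by norm_num) this
  omega

section Aux17

variable {n : ℕ} {v : PV n} {C : (prismG n).Walk v v}

lemma otherNbr (hC : C.IsHamiltonianCycle) (hall : ∀ i : ZMod n, pillar n i ∈ C.edges)
    (j : ZMod n) (t : Bool) :
    ∃ b', b' ≠ ((j, !t) : PV n) ∧ s(((j, t) : PV n), b') ∈ C.edges ∧
      ∀ y, s(((j, t) : PV n), y) ∈ C.edges → y = ((j, !t) : PV n) ∨ y = b' := by
  obtain ⟨a, b, hab, ha, hb, huniq⟩ := hC.isCycle.twoNbrs (hC.mem_support ((j, t) : PV n))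
  have hpill : s(((j, t) : PV n), ((j, !t) : PV n)) ∈ C.edges := by
    cases t
    · exact hall j
    · rw [Sym2.eq_swap]; exact hall j
  rcases huniq _ hpill with h | h
  · refine ⟨b, ?_, hb, ?_⟩
    · rintro rfl; exact hab h.symm
    · intro y hy
      rcases huniq y hy with rfl | rfl
      · exact Or.inl h.symm
      · exact Or.inr rfl
  · refine ⟨a, ?_, ha, ?_⟩
    · rintro rfl; exact hab h
    · intro y hy
      rcases huniq y hy with rfl | rfl
      · exact Or.inr rfl
      · exact Or.inl h.symm

lemma baseEdge_eq (n : ℕ) (j : ZMod n) :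
    baseEdge n (j - 1) = s(((j, false) : PV n), ((j - 1, false) : PV n)) := by
  rw [baseEdge, sub_add_cancel, Sym2.eq_swap]

lemma topEdge_eq (n : ℕ) (j : ZMod n) :
    topEdge n (j - 1) = s(((j, true) : PV n), ((j - 1, true) : PV n)) := by
  rw [topEdge, sub_add_cancel, Sym2.eq_swap]

lemma cycleXor (hn : 3 ≤ n) (hC : C.IsHamiltonianCycle)
    (hall : ∀ i : ZMod n, pillar n i ∈ C.edges) (j : ZMod n) (t : Bool) :
    (s(((j, t) : PV n), ((j + 1, t) : PV n)) ∈ C.edges ↔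
      s(((j, t) : PV n), ((j - 1, t) : PV n)) ∉ C.edges) := by
  obtain ⟨b', hb'ne, hb'mem, huniq⟩ := otherNbr hC hall j t
  have hadj := C.adj_of_mem_edges hb'mem
  rcases prism_adj_cases hadj with h | h | h
  · exact absurd h hb'ne
  · subst h
    have hnotm : s(((j, t) : PV n), ((j - 1, t) : PV n)) ∉ C.edges := by
      intro hmem
      rcases huniq _ hmem with h | h
      · exact (by simp at h)
      · exact twoNe hn j (by simpa [Prod.ext_iff, eq_comm] using h)
    simp [hb'mem, hnotm]
  · subst h
    have hnotm : s(((j, t) : PV n), ((j + 1, t) : PV n)) ∉ C.edges := by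
      intro hmem
      rcases huniq _ hmem with h | h
      · exact (by simp at h)
      · exact twoNe hn j (by simpa [Prod.ext_iff] using h)
    simp [hb'mem, hnotm]

lemma baseIff (hn : 3 ≤ n) (hC : C.IsHamiltonianCycle)
    (hall : ∀ i : ZMod n, pillar n i ∈ C.edges) (j : ZMod n) :
    baseEdge n j ∈ C.edges ↔ baseEdge n (j - 1) ∉ C.edges := by
  rw [baseEdge_eq]
  exact cycleXor hn hC hall j false

lemma topIff (hn : 3 ≤ n) (hC : C.IsHamiltonianCycle)
    (hall : ∀ i : ZMod n, pillar n i ∈ C.edges) (j : ZMod n) :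
    topEdge n j ∈ C.edges ↔ topEdge n (j - 1) ∉ C.edges := by
  rw [topEdge_eq]
  exact cycleXor hn hC hall j true

lemma notBoth (hn : 3 ≤ n) (hC : C.IsHamiltonianCycle)
    (hall : ∀ i : ZMod n, pillar n i ∈ C.edges) (j : ZMod n) :
    ¬ (baseEdge n j ∈ C.edges ∧ topEdge n j ∈ C.edges) := by
  rintro ⟨hb, ht⟩
  haveI : NeZero n := ⟨by omega⟩
  set Q : Set (PV n) := {(j, false), (j + 1, false), (j, true), (j + 1, true)} with hQ
  have closed : ∀ x ∈ Q, ∀ y : PV n, s(x, y) ∈ C.edges → y ∈ Q := by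
    intro x hx y hy
    simp only [hQ, Set.mem_insert_iff, Set.mem_singleton_iff] at hx
    rcases hx with rfl | rfl | rfl | rfl
    · have := hC.isCycle.onlyTwo (hC.mem_support _)
        (p := ((j, true) : PV n)) (q := ((j + 1, false) : PV n))
        (by simp) (hall j) hb y hy
      rcases this with rfl | rfl <;> simp [hQ]
    · have h2 : s(((j + 1, false) : PV n), ((j, false) : PV n)) ∈ C.edges := by
        rw [Sym2.eq_swap]; exact hb
      have := hC.isCycle.onlyTwo (hC.mem_support _)
        (p := ((j + 1, true) : PV n)) (q := ((j, false) : PV n))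
        (by simp) (hall (j + 1)) h2 y hy
      rcases this with rfl | rfl <;> simp [hQ]
    · have h1 : s(((j, true) : PV n), ((j, false) : PV n)) ∈ C.edges := by
        rw [Sym2.eq_swap]; exact hall j
      have := hC.isCycle.onlyTwo (hC.mem_support _)
        (p := ((j, false) : PV n)) (q := ((j + 1, true) : PV n))
        (by simp) h1 ht y hy
      rcases this with rfl | rfl <;> simp [hQ]
    · have h1 : s(((j + 1, true) : PV n), ((j + 1, false) : PV n)) ∈ C.edges := by
        rw [Sym2.eq_swap]; exact hall (j + 1)
      have h2 : s(((j + 1, true) : PV n), ((j, true) : PV n)) ∈ C.edges := by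
        rw [Sym2.eq_swap]; exact ht
      have := hC.isCycle.onlyTwo (hC.mem_support _)
        (p := ((j + 1, false) : PV n)) (q := ((j, true) : PV n))
        (by simp) h1 h2 y hy
      rcases this with rfl | rfl <;> simp [hQ]
  have key : ∀ {a c : C.toSubgraph.verts} (w : C.toSubgraph.coe.Walk a c),
      a.val ∈ Q → c.val ∈ Q := by
    intro a c w
    induction w with
    | nil => exact id
    | cons h p ih =>
      intro ha
      apply ih
      refine closed _ ha _ ?_
      rw [← Walk.mem_edges_toSubgraph]
      exact Subgraph.mem_edgeSet.mpr h
  have hx1 : ((j, false) : PV n) ∈ C.toSubgraph.verts := by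
    rw [Walk.mem_verts_toSubgraph]; exact hC.mem_support _
  have hx2 : ((j + 2, false) : PV n) ∈ C.toSubgraph.verts := by
    rw [Walk.mem_verts_toSubgraph]; exact hC.mem_support _
  obtain ⟨w⟩ := C.toSubgraph_connected.preconnected ⟨_, hx1⟩ ⟨_, hx2⟩
  have hmem : ((j + 2, false) : PV n) ∈ Q := key w (by simp [hQ])
  have himp1 : ((j : ZMod n) + 2) ≠ j := by
    intro h
    have h2 : ((2 : ℕ) : ZMod n) = 0 := by push_cast; linear_combination h
    have := Nat.le_of_dvd (by norm_num) ((ZMod.natCast_eq_zero_iff 2 n).mp h2)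
    omega
  have himp2 : ((j : ZMod n) + 2) ≠ j + 1 := by
    intro h
    have h2 : ((1 : ℕ) : ZMod n) = 0 := by push_cast; linear_combination h
    have := Nat.le_of_dvd (by norm_num) ((ZMod.natCast_eq_zero_iff 1 n).mp h2)
    omega
  simp [hQ, Prod.ext_iff, himp1, himp2] at hmem

lemma baseTopIff (hn : 3 ≤ n) (hC : C.IsHamiltonianCycle)
    (hall : ∀ i : ZMod n, pillar n i ∈ C.edges) (i : ZMod n) :
    baseEdge n i ∈ C.edges ↔ topEdge n (i + 1) ∈ C.edges := by
  constructor
  · intro hb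
    have hti : topEdge n i ∉ C.edges := fun ht => notBoth hn hC hall i ⟨hb, ht⟩
    have := topIff hn hC hall (i + 1)
    rw [add_sub_cancel_right] at this
    exact this.mpr hti
  · intro ht
    have hbi : baseEdge n (i + 1) ∉ C.edges :=
      fun hb => notBoth hn hC hall (i + 1) ⟨hb, ht⟩
    have := baseIff hn hC hall (i + 1)
    rw [add_sub_cancel_right] at this
    by_contra h
    exact hbi (this.mpr h)

lemma stmt1aux (hC : C.IsHamiltonianCycle) (hall : ∀ i : ZMod n, pillar n i ∈ C.edges) :
    ∀ e ∈ C.edges, ∀ f ∈ C.edges, e ≠ f → ¬ IsPillar e → ¬ IsPillar f →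
      ¬ ∃ x, x ∈ e ∧ x ∈ f := by
  rintro e he f hf hef hpe hpf ⟨x, hxe, hxf⟩
  obtain ⟨y, rfl⟩ := Sym2.mem_iff_exists.mp hxe
  obtain ⟨z, rfl⟩ := Sym2.mem_iff_exists.mp hxf
  have hyz : y ≠ z := fun h => hef (by rw [h])
  obtain ⟨i, t⟩ := x
  have hpill : s(((i, t) : PV n), ((i, !t) : PV n)) ∈ C.edges := by
    cases t
    · exact hall i
    · rw [Sym2.eq_swap]; exact hall i
  rcases hC.isCycle.onlyTwo (hC.mem_support _) hyz he hf _ hpill with h | h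
  · refine hpe ⟨i, ?_⟩
    rw [← h]
    cases t
    · rfl
    · rw [Sym2.eq_swap]; rfl
  · refine hpf ⟨i, ?_⟩
    rw [← h]
    cases t
    · rfl
    · rw [Sym2.eq_swap]; rfl

end Aux17


/-- If `n` is even, every hamiltonian cycle of `C_n □ K_2` containing all
`n` pillars alternates strictly between pillar edges and cycle edges (no two non-pillar
edges of the cycle share a vertex), its cycle edges alternate between the top and the base
cycle, and consequently it has exactly `n/2` top-cycle edges and `n/2` base-cycle edges. -/
theorem stmt17 (n : ℕ) (hn : 3 ≤ n) (heven : Even n) {v : PV n}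
    (C : (prismG n).Walk v v) (hC : C.IsHamiltonianCycle)
    (hall : ∀ i : ZMod n, pillar n i ∈ C.edges) :
    (∀ e ∈ C.edges, ∀ f ∈ C.edges, e ≠ f → ¬ IsPillar e → ¬ IsPillar f →
        ¬ ∃ x, x ∈ e ∧ x ∈ f) ∧
    (∀ i : ZMod n, baseEdge n i ∈ C.edges ↔ topEdge n (i + 1) ∈ C.edges) ∧
    {i : ZMod n | topEdge n i ∈ C.edges}.ncard = n / 2 ∧
    {i : ZMod n | baseEdge n i ∈ C.edges}.ncard = n / 2 := by
  haveI : NeZero n := ⟨by omega⟩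
  refine ⟨stmt1aux hC hall, baseTopIff hn hC hall, ?_, ?_⟩ <;>
  · set A : Set (ZMod n) := {i | baseEdge n i ∈ C.edges} with hA
    have hAc : Aᶜ = (fun i : ZMod n => i - 1) '' A := by
      ext i
      simp only [Set.mem_compl_iff, hA, Set.mem_setOf_eq, Set.mem_image]
      constructor
      · intro h
        refine ⟨i + 1, ?_, by rw [add_sub_cancel_right]⟩
        have := baseIff hn hC hall (i + 1)
        rw [add_sub_cancel_right] at this
        exact this.mpr h
      · rintro ⟨a, ha, rfl⟩
        exact (baseIff hn hC hall a).mp ha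
    have hinj : Function.Injective (fun i : ZMod n => i - 1) := by
      intro a b h
      have h2 : a - 1 + 1 = b - 1 + 1 := congrArg (· + 1) h
      rwa [sub_add_cancel, sub_add_cancel] at h2
    have hsum : A.ncard + Aᶜ.ncard = n := by
      rw [Set.ncard_add_ncard_compl, Nat.card_zmod]
    rw [hAc, Set.ncard_image_of_injective _ hinj] at hsum
    have hAcard : A.ncard = n / 2 := by omega
    first
    | exact hAcard
    | · have hT : {i : ZMod n | topEdge n i ∈ C.edges} = (fun i : ZMod n => i + 1) '' A := by
          ext i
          simp only [Set.mem_setOf_eq, Set.mem_image, hA]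
          constructor
          · intro h
            refine ⟨i - 1, ?_, by rw [sub_add_cancel]⟩
            have := baseTopIff hn hC hall (i - 1)
            rw [sub_add_cancel] at this
            exact this.mpr h
          · rintro ⟨a, ha, rfl⟩
            exact (baseTopIff hn hC hall a).mp ha
        have hinj2 : Function.Injective (fun i : ZMod n => i + 1) := by
          intro a b h
          have h2 : a + 1 - 1 = b + 1 - 1 := congrArg (· - 1) h
          rwa [add_sub_cancel_right, add_sub_cancel_right] at h2
        rw [hT, Set.ncard_image_of_injective _ hinj2]
        exact hAcard
end

section
/- If n ≥ 3 is odd, then the prism C_n □ K_2 has no meandering hamiltonian cycle, i.e., every hamiltonian cycle contains two adjacent edges both lying on the top cycle or both on the base cycle. -/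
open SimpleGraph

open SimpleGraph.Walk in
lemma exists_edge_end {V : Type*} {G : SimpleGraph V} {y x : V} (q : G.Walk y x)
    (h : ¬ q.Nil) : ∃ f ∈ q.edges, x ∈ f := by
  have hr : ¬ q.reverse.Nil := by
    rw [not_nil_iff_lt_length] at h ⊢; simpa using h
  refine ⟨s(x, q.reverse.getVert 1), ?_, by simp⟩
  have hlt : 0 < q.reverse.length := (not_nil_iff_lt_length).mp hr
  have := q.reverse.toSubgraph_adj_getVert hlt
  rw [getVert_zero] at this
  have hmem : s(x, q.reverse.getVert 1) ∈ q.reverse.edges :=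
    (mem_edges_toSubgraph _).mp this
  rw [edges_reverse] at hmem
  exact List.mem_reverse.mp hmem

open SimpleGraph.Walk in
lemma cycle_two_edges {V : Type*} {G : SimpleGraph V} {x : V} {p : G.Walk x x}
    (hp : p.IsCycle) :
    ∃ e f, e ≠ f ∧ e ∈ p.edges ∧ f ∈ p.edges ∧ x ∈ e ∧ x ∈ f := by
  cases p with
  | nil => exact absurd hp IsCycle.not_of_nil
  | @cons _ y _ h q =>
    rw [cons_isCycle_iff] at hp
    obtain ⟨hq, he⟩ := hp
    have hqnil : ¬ q.Nil := not_nil_of_ne h.ne'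
    obtain ⟨f, hf, hxf⟩ := exists_edge_end q hqnil
    refine ⟨s(x, y), f, ?_, ?_, ?_, by simp, hxf⟩
    · intro heq; exact he (heq ▸ hf)
    · rw [edges_cons]; exact List.mem_cons_self
    · rw [edges_cons]; exact List.mem_cons_of_mem _ hf

lemma adj_classify {n : ℕ} {u z : PV n} (h : (prismG n).Adj u z) :
    (z.1 = u.1 ∧ z.2 ≠ u.2) ∨ (z.2 = u.2 ∧ (z.1 = u.1 + 1 ∨ u.1 = z.1 + 1)) := by
  simp only [prismG, fromRel_adj] at h
  obtain ⟨hne, (⟨h1, h2⟩ | ⟨h1, h2⟩) | (⟨h1, h2⟩ | ⟨h1, h2⟩)⟩ := h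
  · exact Or.inl ⟨h1.symm, fun hh => h2 hh.symm⟩
  · exact Or.inr ⟨h1.symm, Or.inl h2⟩
  · exact Or.inl ⟨h1, h2⟩
  · exact Or.inr ⟨h1, Or.inr h2⟩

lemma edge_at_base {n : ℕ} {e : Sym2 (PV n)} (he : e ∈ (prismG n).edgeSet)
    {i : ZMod n} (hm : ((i, false) : PV n) ∈ e) :
    e = pillar n i ∨ IsBaseEdge e := by
  obtain ⟨z, rfl⟩ := Sym2.mem_iff_exists.mp hm
  have h : (prismG n).Adj (i, false) z := he
  obtain ⟨z1, z2⟩ := z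
  rcases adj_classify h with ⟨h1, h2⟩ | ⟨h1, h2 | h2⟩
  · left
    simp only at h1 h2
    subst h1
    cases z2
    · simp at h2
    · rfl
  · right
    refine ⟨i, ?_⟩
    simp only at h1 h2
    subst h1; subst h2
    rfl
  · right
    refine ⟨z1, ?_⟩
    simp only at h1 h2
    subst h1
    rw [baseEdge, ← h2, Sym2.eq_swap]

lemma edge_at_top {n : ℕ} {e : Sym2 (PV n)} (he : e ∈ (prismG n).edgeSet)
    {i : ZMod n} (hm : ((i, true) : PV n) ∈ e) :
    e = pillar n i ∨ IsTopEdge e := by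
  obtain ⟨z, rfl⟩ := Sym2.mem_iff_exists.mp hm
  have h : (prismG n).Adj (i, true) z := he
  obtain ⟨z1, z2⟩ := z
  rcases adj_classify h with ⟨h1, h2⟩ | ⟨h1, h2 | h2⟩
  · left
    simp only at h1 h2
    subst h1
    cases z2
    · rw [pillar, Sym2.eq_swap]
    · simp at h2
  · right
    refine ⟨i, ?_⟩
    simp only at h1 h2
    subst h1; subst h2
    rfl
  · right
    refine ⟨z1, ?_⟩
    simp only at h1 h2
    subst h1
    rw [topEdge, ← h2, Sym2.eq_swap]

def flipB {n : ℕ} : Sym2 (PV n) → Bool :=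
  Sym2.lift ⟨fun a b => xor a.2 b.2, fun a b => by simp [Bool.xor_comm]⟩

@[simp] lemma flipB_mk {n : ℕ} (a b : PV n) : flipB s(a, b) = xor a.2 b.2 := rfl

open SimpleGraph.Walk in
lemma parity_lemma {n : ℕ} {u w : PV n} (p : (prismG n).Walk u w) :
    (p.edges.countP flipB) % 2 = if u.2 = w.2 then 0 else 1 := by
  induction p with
  | nil => simp
  | @cons u y w h q ih =>
    rw [edges_cons, List.countP_cons]
    simp only [flipB_mk]
    obtain ⟨u1, u2⟩ := u
    obtain ⟨y1, y2⟩ := y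
    obtain ⟨w1, w2⟩ := w
    revert ih
    cases u2 <;> cases y2 <;> cases w2 <;> simp <;> omega

lemma pillar_inj {n : ℕ} : Function.Injective (pillar n) := by
  intro i j h
  simp only [pillar, Sym2.eq, Sym2.rel_iff', Prod.mk.injEq, Prod.swap_prod_mk] at h
  tauto

/-- If `n ≥ 3` is odd, the prism `C_n □ K_2` has no meandering hamiltonian
cycle: every hamiltonian cycle contains two adjacent edges both lying on the top cycle or
both on the base cycle. -/
theorem stmt19 (n : ℕ) (hn : 3 ≤ n) (hodd : Odd n) {v : PV n}
    (C : (prismG n).Walk v v) (hC : C.IsHamiltonianCycle) :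
    ∃ e ∈ C.edges, ∃ f ∈ C.edges, e ≠ f ∧
      ((IsBaseEdge e ∧ IsBaseEdge f) ∨ (IsTopEdge e ∧ IsTopEdge f)) ∧
      ∃ x, x ∈ e ∧ x ∈ f := by
  haveI : NeZero n := ⟨by omega⟩
  by_contra hcon
  push_neg at hcon
  have hpil : ∀ i : ZMod n, pillar n i ∈ C.edges := by
    intro i
    by_contra hnp
    have hy : ((i, false) : PV n) ∈ C.support := hC.mem_support _
    have hq : ((C.rotate _ hy).IsCycle) := (Walk.isCycle_rotate hy).mpr hC.isCycle
    obtain ⟨e, f, hef, he, hf, hxe, hxf⟩ := cycle_two_edges hq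
    have he' : e ∈ C.edges := (Walk.rotate_edges C _ hy).mem_iff.mp he
    have hf' : f ∈ C.edges := (Walk.rotate_edges C _ hy).mem_iff.mp hf
    have hbe : IsBaseEdge e := by
      rcases edge_at_base (C.edges_subset_edgeSet he') hxe with h | h
      · exact absurd (h ▸ he') hnp
      · exact h
    have hbf : IsBaseEdge f := by
      rcases edge_at_base (C.edges_subset_edgeSet hf') hxf with h | h
      · exact absurd (h ▸ hf') hnp
      · exact h
    exact absurd hxf (hcon e he' f hf' hef (Or.inl ⟨hbe, hbf⟩) _ hxe)
  have hcount : C.edges.countP flipB = n := by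
    rw [List.countP_eq_length_filter]
    have hnd : (C.edges.filter flipB).Nodup := hC.isCycle.edges_nodup.filter _
    have hset : (C.edges.filter flipB).toFinset = Finset.image (pillar n) Finset.univ := by
      ext e
      simp only [List.mem_toFinset, List.mem_filter, Finset.mem_image, Finset.mem_univ, true_and]
      constructor
      · rintro ⟨heC, hfl⟩
        induction e using Sym2.ind with
        | _ u z =>
          have hadj : (prismG n).Adj u z := C.edges_subset_edgeSet heC
          rcases adj_classify hadj with ⟨h1, h2⟩ | ⟨h1, _⟩
          · refine ⟨u.1, ?_⟩
            obtain ⟨u1, u2⟩ := u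
            obtain ⟨z1, z2⟩ := z
            simp only at h1 h2
            subst h1
            cases u2 <;> cases z2 <;> simp_all [pillar, Sym2.eq_swap]
          · rw [flipB_mk, h1] at hfl
            simp at hfl
      · rintro ⟨i, rfl⟩
        exact ⟨hpil i, by simp [pillar]⟩
    have hlen : (C.edges.filter flipB).length = (C.edges.filter flipB).toFinset.card :=
      (List.toFinset_card_of_nodup hnd).symm
    rw [hlen, hset, Finset.card_image_of_injective _ pillar_inj, Finset.card_univ, ZMod.card]
  have hpar := parity_lemma C
  rw [hcount, if_pos rfl] at hpar
  rw [Nat.odd_iff] at hodd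
  omega
end
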